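/- Define T(n,s,i,b₀) as the number of s-element subsets γ = {γ₁ < ... < γ_s} of {1,...,n} with exactly i indices j such that γⱼ ≠ b₀ + 2j − 1. Then for 0 ≤ i ≤ s ≤ ⌊(n-1)/2⌋ and 1 ≤ b₀ ≤ n − 2s − 1, T(n,s,i,b₀) = T(n,s,i,b₀+1). -/

import Mathlib

/-- Number of marks not at home w.r.t. barrier start `b0`: indices `j` (0-indexed)
with `γⱼ₊₁ ≠ b0 + 2(j+1) - 1`. -/
def natCountB (b0 : ℕ) (γ : Finset ℕ) : ℕ :=
  ((Finset.range γ.card).filter fun j => (γ.sort (· ≤ ·)).getD j 0 ≠ b0 + 2 * j + 1).card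

/-- `T n s i b0` counts the `s`-element subsets of `{1,…,n}` with exactly `i` marks
not at home with respect to barrier start `b0`. -/
def T (n s i b0 : ℕ) : ℕ :=
  (((Finset.Icc 1 n).powersetCard s).filter fun γ => natCountB b0 γ = i).card

theorem sort_insert_top {δ : Finset ℕ} {n : ℕ} (h : ∀ x ∈ δ, x < n) :
    (insert n δ).sort (· ≤ ·) = δ.sort (· ≤ ·) ++ [n] := by
  have hn : n ∉ δ := fun hm => lt_irrefl n (h n hm)
  have hperm : List.Perm ((insert n δ).sort (· ≤ ·)) (δ.sort (· ≤ ·) ++ [n]) := by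
    rw [← Multiset.coe_eq_coe]
    push_cast [Finset.sort_eq]
    rw [Finset.insert_val_of_notMem hn, ← Multiset.coe_add, Finset.sort_eq, add_comm]
    rfl
  refine List.Perm.eq_of_pairwise' (Finset.pairwise_sort _ _) ?_ hperm
  rw [List.pairwise_append]
  refine ⟨Finset.pairwise_sort _ _, List.pairwise_singleton _ n, ?_⟩
  intro x hx y hy
  simp at hy; subst hy
  exact le_of_lt (h x ((Finset.mem_sort _).mp hx))

theorem sort_image_succ (δ : Finset ℕ) :
    (δ.image (· + 1)).sort (· ≤ ·) = (δ.sort (· ≤ ·)).map (· + 1) := by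
  have hperm : List.Perm ((δ.image (· + 1)).sort (· ≤ ·)) ((δ.sort (· ≤ ·)).map (· + 1)) := by
    rw [← Multiset.coe_eq_coe]
    push_cast [Finset.sort_eq]
    rw [Finset.image_val_of_injOn (Set.injOn_of_injective (add_left_injective 1)),
      ← Multiset.map_coe, Finset.sort_eq]
  refine List.Perm.eq_of_pairwise' (Finset.pairwise_sort _ _) ?_ hperm
  exact List.Pairwise.map _ (fun a b hab => by omega) (Finset.pairwise_sort _ _)

theorem natCountB_eq_sum (b0 : ℕ) (γ : Finset ℕ) :
    natCountB b0 γ = ∑ j ∈ Finset.range γ.card,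
      if (γ.sort (· ≤ ·)).getD j 0 ≠ b0 + 2 * j + 1 then 1 else 0 :=
  Finset.card_filter _ _

theorem natCountB_insert_top {b0 n : ℕ} {δ : Finset ℕ} (h : ∀ x ∈ δ, x < n)
    (hne : n ≠ b0 + 2 * δ.card + 1) :
    natCountB b0 (insert n δ) = natCountB b0 δ + 1 := by
  have hn : n ∉ δ := fun hm => lt_irrefl n (h n hm)
  have hlen : (δ.sort (· ≤ ·)).length = δ.card := Finset.length_sort _
  rw [natCountB_eq_sum, natCountB_eq_sum, Finset.card_insert_of_notMem hn,
    sort_insert_top h, Finset.sum_range_succ]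
  congr 1
  · refine Finset.sum_congr rfl fun j hj => ?_
    rw [List.getD_append _ _ _ _ (by rw [hlen]; exact Finset.mem_range.mp hj)]
  · rw [List.getD_append_right _ _ _ _ (le_of_eq hlen), hlen, Nat.sub_self]
    simp [hne]

theorem natCountB_image_succ (c : ℕ) (δ : Finset ℕ) :
    natCountB (c + 1) (δ.image (· + 1)) = natCountB c δ := by
  have hcard : (δ.image (· + 1)).card = δ.card :=
    Finset.card_image_of_injective _ (add_left_injective 1)
  have hlen : (δ.sort (· ≤ ·)).length = δ.card := Finset.length_sort _
  rw [natCountB_eq_sum, natCountB_eq_sum, hcard, sort_image_succ]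
  refine Finset.sum_congr rfl fun j hj => ?_
  have hj' : j < (δ.sort (· ≤ ·)).length := by rw [hlen]; exact Finset.mem_range.mp hj
  rw [List.getD_eq_getElem _ _ (by simpa using hj'), List.getD_eq_getElem _ _ hj',
    List.getElem_map]
  refine if_congr ?_ rfl rfl
  constructor <;> intro hx hc <;> apply hx <;> omega

theorem natCountB_insert_one (c : ℕ) (δ : Finset ℕ) (hpos : ∀ x ∈ δ, 1 ≤ x) :
    natCountB (c + 1) (insert 1 (δ.image (· + 1))) = natCountB (c + 2) δ + 1 := by
  have h1 : (1 : ℕ) ∉ δ.image (· + 1) := by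
    simp only [Finset.mem_image, not_exists]
    intro x hx
    exact absurd hx.2 (by have := hpos x hx.1; omega)
  have hcard : (δ.image (· + 1)).card = δ.card :=
    Finset.card_image_of_injective _ (add_left_injective 1)
  have hlen : (δ.sort (· ≤ ·)).length = δ.card := Finset.length_sort _
  have hsort : (insert 1 (δ.image (· + 1))).sort (· ≤ ·)
      = 1 :: (δ.sort (· ≤ ·)).map (· + 1) := by
    rw [Finset.sort_insert _ (fun b hb => ?_) h1, sort_image_succ]
    · rcases Finset.mem_image.mp hb with ⟨x, _, rfl⟩; omega
  rw [natCountB_eq_sum, natCountB_eq_sum, Finset.card_insert_of_notMem h1, hcard, hsort,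
    Finset.sum_range_succ']
  congr 1
  · refine Finset.sum_congr rfl fun j hj => ?_
    have hj' : j < (δ.sort (· ≤ ·)).length := by rw [hlen]; exact Finset.mem_range.mp hj
    rw [List.getD_cons_succ, List.getD_eq_getElem _ _ (by simpa using hj'),
      List.getD_eq_getElem _ _ hj', List.getElem_map]
    refine if_congr ?_ rfl rfl
    constructor <;> intro hx hc <;> apply hx <;> omega

theorem image_pred_image_succ {γ : Finset ℕ} (h : ∀ x ∈ γ, 2 ≤ x) :
    (γ.image (· - 1)).image (· + 1) = γ := by
  rw [Finset.image_image]
  rw [show Finset.image ((· + 1) ∘ (· - 1)) γ = Finset.image id γ from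
    Finset.image_congr (fun x hx => by have := h x hx; simp; omega)]
  exact Finset.image_id

theorem image_succ_image_pred (δ : Finset ℕ) : (δ.image (· + 1)).image (· - 1) = δ := by
  rw [Finset.image_image]
  rw [show Finset.image ((· - 1) ∘ (· + 1)) δ = Finset.image id δ from
    Finset.image_congr (fun x hx => by simp)]
  exact Finset.image_id

theorem cardA1 (n k i b0 : ℕ) (hn : 1 ≤ n) :
    (((Finset.Icc 1 n).powersetCard k).filter fun γ => natCountB b0 γ = i ∧ n ∉ γ).card
      = (((Finset.Icc 1 (n-1)).powersetCard k).filter fun γ => natCountB b0 γ = i).card := by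
  congr 1
  apply Finset.ext; intro γ
  simp only [Finset.mem_filter, Finset.mem_powersetCard]
  constructor
  · rintro ⟨⟨hsub, hcard⟩, hcount, hn'⟩
    refine ⟨⟨fun x hx => ?_, hcard⟩, hcount⟩
    have hx' := Finset.mem_Icc.mp (hsub hx)
    have : x ≠ n := fun e => hn' (e ▸ hx)
    exact Finset.mem_Icc.mpr ⟨hx'.1, by omega⟩
  · rintro ⟨⟨hsub, hcard⟩, hcount⟩
    refine ⟨⟨fun x hx => ?_, hcard⟩, hcount, fun hmem => ?_⟩
    · have := Finset.mem_Icc.mp (hsub hx)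
      exact Finset.mem_Icc.mpr ⟨this.1, by omega⟩
    · have := Finset.mem_Icc.mp (hsub hmem); omega

theorem cardA2 (n s i b0 : ℕ) (h2s : b0 + 2*s + 1 < n) :
    (((Finset.Icc 1 n).powersetCard (s+1)).filter fun γ => natCountB b0 γ = i ∧ n ∈ γ).card
      = (((Finset.Icc 1 (n-1)).powersetCard s).filter fun δ => natCountB b0 δ + 1 = i).card := by
  have hn : 1 ≤ n := by omega
  apply Finset.card_nbij' (fun γ => γ.erase n) (fun δ => insert n δ)
  · intro γ hγ
    simp only [Finset.mem_coe, Finset.mem_filter, Finset.mem_powersetCard] at hγ ⊢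
    obtain ⟨⟨hsub, hcard⟩, hcount, hmem⟩ := hγ
    have hlt : ∀ x ∈ γ.erase n, x < n := by
      intro x hx
      have h1 := Finset.mem_Icc.mp (hsub (Finset.mem_of_mem_erase hx))
      have h2 := Finset.ne_of_mem_erase hx
      omega
    have hce : (γ.erase n).card = s := by
      rw [Finset.card_erase_of_mem hmem, hcard]; omega
    refine ⟨⟨fun x hx => ?_, hce⟩, ?_⟩
    · have h1 := Finset.mem_Icc.mp (hsub (Finset.mem_of_mem_erase hx))
      have h2 := Finset.ne_of_mem_erase hx
      exact Finset.mem_Icc.mpr ⟨h1.1, by omega⟩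
    · have := natCountB_insert_top (b0 := b0) hlt (by rw [hce]; omega)
      rw [Finset.insert_erase hmem] at this
      omega
  · intro δ hδ
    simp only [Finset.mem_coe, Finset.mem_filter, Finset.mem_powersetCard] at hδ ⊢
    obtain ⟨⟨hsub, hcard⟩, hcount⟩ := hδ
    have hnot : n ∉ δ := fun hm => by
      have := Finset.mem_Icc.mp (hsub hm); omega
    have hlt : ∀ x ∈ δ, x < n := by
      intro x hx; have := Finset.mem_Icc.mp (hsub hx); omega
    refine ⟨⟨fun x hx => ?_, ?_⟩, ?_, Finset.mem_insert_self _ _⟩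
    · rcases Finset.mem_insert.mp hx with rfl | hx'
      · exact Finset.mem_Icc.mpr ⟨hn, le_refl _⟩
      · have := Finset.mem_Icc.mp (hsub hx'); exact Finset.mem_Icc.mpr ⟨this.1, by omega⟩
    · rw [Finset.card_insert_of_notMem hnot, hcard]
    · rw [natCountB_insert_top hlt (by rw [hcard]; omega)]
      exact hcount
  · intro γ hγ
    simp only [Finset.mem_coe, Finset.mem_filter] at hγ
    exact Finset.insert_erase hγ.2.2
  · intro δ hδ
    simp only [Finset.mem_coe, Finset.mem_filter, Finset.mem_powersetCard] at hδ
    have hnot : n ∉ δ := fun hm => by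
      have := Finset.mem_Icc.mp (hδ.1.1 hm); omega
    exact Finset.erase_insert hnot

theorem cardB1 (n k i b0 : ℕ) (hn : 1 ≤ n) :
    (((Finset.Icc 1 n).powersetCard k).filter fun γ => natCountB (b0+1) γ = i ∧ 1 ∉ γ).card
      = (((Finset.Icc 1 (n-1)).powersetCard k).filter fun δ => natCountB b0 δ = i).card := by
  apply Finset.card_nbij' (fun γ => γ.image (· - 1)) (fun δ => δ.image (· + 1))
  · intro γ hγ
    simp only [Finset.mem_coe, Finset.mem_filter, Finset.mem_powersetCard] at hγ ⊢
    obtain ⟨⟨hsub, hcard⟩, hcount, hone⟩ := hγ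
    have h2 : ∀ x ∈ γ, 2 ≤ x := by
      intro x hx
      have := Finset.mem_Icc.mp (hsub hx)
      have : x ≠ 1 := fun e => hone (e ▸ hx)
      omega
    refine ⟨⟨fun y hy => ?_, ?_⟩, ?_⟩
    · rcases Finset.mem_image.mp hy with ⟨x, hx, rfl⟩
      have := Finset.mem_Icc.mp (hsub hx)
      have := h2 x hx
      exact Finset.mem_Icc.mpr ⟨by omega, by omega⟩
    · rw [Finset.card_image_of_injOn, hcard]
      intro x hx y hy hxy
      have := h2 x hx; have := h2 y hy
      simp only at hxy; omega
    · have := natCountB_image_succ b0 (γ.image (· - 1))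
      rw [image_pred_image_succ h2] at this
      omega
  · intro δ hδ
    simp only [Finset.mem_coe, Finset.mem_filter, Finset.mem_powersetCard] at hδ ⊢
    obtain ⟨⟨hsub, hcard⟩, hcount⟩ := hδ
    refine ⟨⟨fun y hy => ?_, ?_⟩, ?_, ?_⟩
    · rcases Finset.mem_image.mp hy with ⟨x, hx, rfl⟩
      have := Finset.mem_Icc.mp (hsub hx)
      exact Finset.mem_Icc.mpr ⟨by omega, by omega⟩
    · rw [Finset.card_image_of_injective _ (add_left_injective 1), hcard]
    · rw [natCountB_image_succ]; exact hcount
    · intro hmem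
      rcases Finset.mem_image.mp hmem with ⟨x, hx, hx1⟩
      have := Finset.mem_Icc.mp (hsub hx)
      omega
  · intro γ hγ
    simp only [Finset.mem_coe, Finset.mem_filter, Finset.mem_powersetCard] at hγ
    obtain ⟨⟨hsub, hcard⟩, hcount, hone⟩ := hγ
    refine image_pred_image_succ fun x hx => ?_
    have := Finset.mem_Icc.mp (hsub hx)
    have : x ≠ 1 := fun e => hone (e ▸ hx)
    omega
  · intro δ _
    exact image_succ_image_pred δ

theorem cardB2 (n s i b0 : ℕ) (hn : 1 ≤ n) :
    (((Finset.Icc 1 n).powersetCard (s+1)).filter fun γ => natCountB (b0+1) γ = i ∧ 1 ∈ γ).card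
      = (((Finset.Icc 1 (n-1)).powersetCard s).filter fun δ => natCountB (b0+2) δ + 1 = i).card := by
  apply Finset.card_nbij' (fun γ => (γ.erase 1).image (· - 1))
    (fun δ => insert 1 (δ.image (· + 1)))
  · intro γ hγ
    simp only [Finset.mem_coe, Finset.mem_filter, Finset.mem_powersetCard] at hγ ⊢
    obtain ⟨⟨hsub, hcard⟩, hcount, hone⟩ := hγ
    have h2 : ∀ x ∈ γ.erase 1, 2 ≤ x := by
      intro x hx
      have h1 := Finset.mem_Icc.mp (hsub (Finset.mem_of_mem_erase hx))
      have := Finset.ne_of_mem_erase hx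
      omega
    have hkey : insert 1 (((γ.erase 1).image (· - 1)).image (· + 1)) = γ := by
      rw [image_pred_image_succ h2, Finset.insert_erase hone]
    refine ⟨⟨fun y hy => ?_, ?_⟩, ?_⟩
    · rcases Finset.mem_image.mp hy with ⟨x, hx, rfl⟩
      have := Finset.mem_Icc.mp (hsub (Finset.mem_of_mem_erase hx))
      have := h2 x hx
      exact Finset.mem_Icc.mpr ⟨by omega, by omega⟩
    · rw [Finset.card_image_of_injOn, Finset.card_erase_of_mem hone, hcard]
      · omega
      intro x hx y hy hxy
      have := h2 x hx; have := h2 y hy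
      simp only at hxy; omega
    · have := natCountB_insert_one b0 ((γ.erase 1).image (· - 1)) (by
        intro y hy
        rcases Finset.mem_image.mp hy with ⟨x, hx, rfl⟩
        have := h2 x hx; omega)
      rw [hkey] at this
      omega
  · intro δ hδ
    simp only [Finset.mem_coe, Finset.mem_filter, Finset.mem_powersetCard] at hδ ⊢
    obtain ⟨⟨hsub, hcard⟩, hcount⟩ := hδ
    have hpos : ∀ x ∈ δ, 1 ≤ x := fun x hx => (Finset.mem_Icc.mp (hsub hx)).1
    have h1 : (1:ℕ) ∉ δ.image (· + 1) := by
      intro hmem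
      rcases Finset.mem_image.mp hmem with ⟨x, hx, hx1⟩
      have := hpos x hx; omega
    refine ⟨⟨fun y hy => ?_, ?_⟩, ?_, Finset.mem_insert_self _ _⟩
    · rcases Finset.mem_insert.mp hy with rfl | hy'
      · exact Finset.mem_Icc.mpr ⟨le_refl _, hn⟩
      · rcases Finset.mem_image.mp hy' with ⟨x, hx, rfl⟩
        have := Finset.mem_Icc.mp (hsub hx)
        exact Finset.mem_Icc.mpr ⟨by omega, by omega⟩
    · rw [Finset.card_insert_of_notMem h1,
        Finset.card_image_of_injective _ (add_left_injective 1), hcard]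
    · rw [natCountB_insert_one b0 δ hpos]; exact hcount
  · intro γ hγ
    simp only [Finset.mem_coe, Finset.mem_filter, Finset.mem_powersetCard] at hγ
    obtain ⟨⟨hsub, hcard⟩, hcount, hone⟩ := hγ
    have h2 : ∀ x ∈ γ.erase 1, 2 ≤ x := by
      intro x hx
      have h1 := Finset.mem_Icc.mp (hsub (Finset.mem_of_mem_erase hx))
      have := Finset.ne_of_mem_erase hx
      omega
    beta_reduce
    rw [image_pred_image_succ h2, Finset.insert_erase hone]
  · intro δ hδ
    simp only [Finset.mem_coe, Finset.mem_filter, Finset.mem_powersetCard] at hδ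
    have hpos : ∀ x ∈ δ, 1 ≤ x := fun x hx => (Finset.mem_Icc.mp (hδ.1.1 hx)).1
    have h1 : (1:ℕ) ∉ δ.image (· + 1) := by
      intro hmem
      rcases Finset.mem_image.mp hmem with ⟨x, hx, hx1⟩
      have := hpos x hx; omega
    beta_reduce
    rw [Finset.erase_insert h1, image_succ_image_pred]

theorem card_split (S : Finset (Finset ℕ)) (p : Finset ℕ → Prop) [DecidablePred p] (a : ℕ) :
    (S.filter p).card
      = (S.filter fun γ => p γ ∧ a ∈ γ).card + (S.filter fun γ => p γ ∧ a ∉ γ).card := by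
  have h := Finset.card_filter_add_card_filter_not
    (s := S.filter p) (p := fun γ => a ∈ γ)
  rw [Finset.filter_filter, Finset.filter_filter] at h
  exact h.symm

theorem stmt6 (n s i b0 : ℕ) (h1 : i ≤ s) (h2 : s ≤ (n - 1) / 2)
    (h3 : 1 ≤ b0) (h4 : b0 ≤ n - 2 * s - 1) :
    T n s i b0 = T n s i (b0 + 1) := by
  induction s generalizing n i b0 with
  | zero =>
    unfold T
    congr 1
    apply Finset.filter_congr
    intro γ hγ
    have hc : γ.card = 0 := (Finset.mem_powersetCard.mp hγ).2
    simp [natCountB, hc]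
  | succ s ih =>
    have hn : 2 * s + 4 ≤ n := by omega
    have hb : b0 + 2 * s + 1 < n := by omega
    rw [show T n (s+1) i b0
        = (((Finset.Icc 1 n).powersetCard (s+1)).filter
            fun γ => natCountB b0 γ = i ∧ n ∈ γ).card
          + (((Finset.Icc 1 n).powersetCard (s+1)).filter
            fun γ => natCountB b0 γ = i ∧ n ∉ γ).card from card_split _ _ n]
    rw [show T n (s+1) i (b0+1)
        = (((Finset.Icc 1 n).powersetCard (s+1)).filter
            fun γ => natCountB (b0+1) γ = i ∧ 1 ∈ γ).card
          + (((Finset.Icc 1 n).powersetCard (s+1)).filter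
            fun γ => natCountB (b0+1) γ = i ∧ 1 ∉ γ).card from by
      rw [add_comm]; exact card_split _ _ 1]
    rw [cardA1 n (s+1) i b0 (by omega), cardA2 n s i b0 (by omega),
      cardB1 n (s+1) i b0 (by omega), cardB2 n s i b0 (by omega)]
    congr 1
    rcases i with _ | k
    · rw [Finset.filter_false_of_mem (fun δ _ => by omega),
        Finset.filter_false_of_mem (fun δ _ => by omega)]
    · have e1 : (((Finset.Icc 1 (n-1)).powersetCard s).filter
          fun δ => natCountB b0 δ + 1 = k + 1) = (((Finset.Icc 1 (n-1)).powersetCard s).filter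
          fun δ => natCountB b0 δ = k) := by
        apply Finset.filter_congr; intro δ _; constructor <;> (intro h; omega)
      have e2 : (((Finset.Icc 1 (n-1)).powersetCard s).filter
          fun δ => natCountB (b0+2) δ + 1 = k + 1) = (((Finset.Icc 1 (n-1)).powersetCard s).filter
          fun δ => natCountB (b0+2) δ = k) := by
        apply Finset.filter_congr; intro δ _; constructor <;> (intro h; omega)
      rw [e1, e2]
      have i1 : T (n-1) s k b0 = T (n-1) s k (b0+1) :=
        ih (n-1) k b0 (by omega) (by omega) (by omega) (by omega)
      have i2 : T (n-1) s k (b0+1) = T (n-1) s k (b0+2) :=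
        ih (n-1) k (b0+1) (by omega) (by omega) (by omega) (by omega)
      exact i1.trans i2
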